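/- arXiv:1509.07442 — 3 statements merged into one kernel-verified Lean document; each statement's English description precedes it below -/
import Mathlib

section
/- Let τ ∈ {1,2}, let T : L²(Ω) → L²(Ω) be bounded linear with T 1_Ω = 1_Ω, let g ∈ L²(Ω) and ν_τ > 0 with ν_τ|Ω| ≤ ‖g − g_Ω‖_{L^τ(Ω)}^τ, and assume the inequality-constrained problem min { TV(u) : u ∈ L²(Ω), TV(u) < ∞, H_τ(u;g) ≤ B_τ } admits a solution. Then the equality-constrained problem min { TV(u) : u ∈ L²(Ω), TV(u) < ∞, H_τ(u;g) = B_τ } also admits a solution, and the two problems are equivalent in the sense that inf { TV(u) : H_τ(u;g) ≤ B_τ } = inf { TV(u) : H_τ(u;g) = B_τ }. -/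
open MeasureTheory Filter
open scoped ENNReal NNReal

noncomputable section

abbrev E2 : Type := EuclideanSpace ℝ (Fin 2)

abbrev μΩ (Ω : Set E2) : Measure E2 := MeasureTheory.volume.restrict Ω

abbrev LpΩ (Ω : Set E2) := Lp ℝ 2 (μΩ Ω)

/-- Discrete divergence of a C¹ vector field. -/
def divg (ξ : E2 → E2) (x : E2) : ℝ :=
  ∑ i : Fin 2, fderiv ℝ ξ x (EuclideanSpace.single i 1) i

/-- Admissible test vector fields for the total variation. -/
def IsTestField (Ω : Set E2) (ξ : E2 → E2) : Prop :=
  ContDiff ℝ 1 ξ ∧ HasCompactSupport ξ ∧ tsupport ξ ⊆ Ω ∧ ∀ x, ‖ξ x‖ ≤ 1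

/-- Total variation of `u ∈ L²(Ω)` (valued in `ℝ≥0∞`). -/
def TV (Ω : Set E2) (u : LpΩ Ω) : ℝ≥0∞ :=
  ⨆ ξ : {ξ : E2 → E2 // IsTestField Ω ξ},
    ENNReal.ofReal (∫ x, u x * divg ξ.1 x ∂(μΩ Ω))

/-- Fidelity term `H_τ(u;g) = (1/τ)‖Tu - g‖_{L^τ}^τ`. -/
def Hfid (Ω : Set E2) (τ : ℕ) (T : LpΩ Ω →L[ℝ] LpΩ Ω) (g u : LpΩ Ω) : ℝ :=
  (1 / (τ : ℝ)) * ∫ x, |(T u - g : LpΩ Ω) x| ^ τ ∂(μΩ Ω)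

/-- The functional `J_τ(u,α) = H_τ(u;g) + α · TV(u)` (valued in `ℝ≥0∞`). -/
def Jfun (Ω : Set E2) (τ : ℕ) (T : LpΩ Ω →L[ℝ] LpΩ Ω) (g : LpΩ Ω) (α : ℝ)
    (u : LpΩ Ω) : ℝ≥0∞ :=
  ENNReal.ofReal (Hfid Ω τ T g u) + ENNReal.ofReal α * TV Ω u

/-- The mean value `g_Ω` of `g` over `Ω`. -/
def meanG (Ω : Set E2) (g : LpΩ Ω) : ℝ :=
  (∫ x, g x ∂(μΩ Ω)) / (MeasureTheory.volume Ω).toReal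

/-- `‖g - g_Ω‖_{L^τ(Ω)}^τ`. -/
def gMeanDist (Ω : Set E2) (τ : ℕ) (g : LpΩ Ω) : ℝ :=
  ∫ x, |g x - meanG Ω g| ^ τ ∂(μΩ Ω)

/-- `B_τ = (ν_τ/τ)|Ω|`. -/
def Bval (Ω : Set E2) (τ : ℕ) (ν : ℝ) : ℝ :=
  (ν / (τ : ℝ)) * (MeasureTheory.volume Ω).toReal

/-- `o` represents the constant function `1_Ω` in `L²(Ω)`. -/
def IsOneFun (Ω : Set E2) (o : LpΩ Ω) : Prop :=
  ∀ᵐ x ∂(μΩ Ω), o x = 1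

/-- `u` minimizes `J_τ(·,α)` over `{TV < ∞}`. -/
def IsJMin (Ω : Set E2) (τ : ℕ) (T : LpΩ Ω →L[ℝ] LpΩ Ω) (g : LpΩ Ω) (α : ℝ)
    (u : LpΩ Ω) : Prop :=
  TV Ω u < ⊤ ∧ ∀ v, TV Ω v < ⊤ → Jfun Ω τ T g α u ≤ Jfun Ω τ T g α v

/-! ### Auxiliary lemmas -/

section Aux

/-- The component-in-direction functions of the derivative of a C¹ field are continuous. -/
lemma aux_Dcont {ξ : E2 → E2} (hcd : ContDiff ℝ 1 ξ) (v : E2) (i : Fin 2) :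
    Continuous (fun x => fderiv ℝ ξ x v i) := by
  have h1 : Continuous (fun x => fderiv ℝ ξ x) := hcd.continuous_fderiv one_ne_zero
  exact (EuclideanSpace.proj (𝕜 := ℝ) i).continuous.comp (h1.clm_apply continuous_const)

lemma aux_Dhcs {ξ : E2 → E2} (hcs : HasCompactSupport ξ) (v : E2) (i : Fin 2) :
    HasCompactSupport (fun x => fderiv ℝ ξ x v i) := by
  have := (hcs.fderiv (𝕜 := ℝ))
  exact this.comp_left (g := fun L : E2 →L[ℝ] E2 => L v i) (by simp)

/-- Integral of a directional-derivative component of a compactly supported C¹ field is zero. -/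
lemma aux_Dint_zero {ξ : E2 → E2} (hcd : ContDiff ℝ 1 ξ) (hcs : HasCompactSupport ξ)
    (v : E2) (i : Fin 2) :
    ∫ x, fderiv ℝ ξ x v i ∂(volume : Measure E2) = 0 := by
  have hdξ : Differentiable ℝ ξ := hcd.differentiable one_ne_zero
  have hcomp : ∀ x : E2, HasFDerivAt (fun y => ξ y i)
      ((EuclideanSpace.proj (𝕜 := ℝ) i).comp (fderiv ℝ ξ x)) x :=
    fun x => (EuclideanSpace.proj (𝕜 := ℝ) i).hasFDerivAt.comp x (hdξ x).hasFDerivAt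
  have hfe : ∀ x, fderiv ℝ (fun y => ξ y i) x v = fderiv ℝ ξ x v i :=
    fun x => by rw [(hcomp x).fderiv]; rfl
  have hgi_cont : Continuous (fun x => ξ x i) :=
    (EuclideanSpace.proj (𝕜 := ℝ) i).continuous.comp hcd.continuous
  have hgi_hcs : HasCompactSupport (fun x => ξ x i) :=
    hcs.comp_left (g := fun y : E2 => y i) (by simp)
  have key := integral_mul_fderiv_eq_neg_fderiv_mul_of_integrable
    (μ := (volume : Measure E2)) (f := fun _ : E2 => (1:ℝ)) (g := fun y => ξ y i) (v := v)
    (by simp)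
    (by simpa [hfe] using
      ((aux_Dcont hcd v i).integrable_of_hasCompactSupport (aux_Dhcs hcs v i)))
    (by simpa using hgi_cont.integrable_of_hasCompactSupport hgi_hcs)
    (fun x _ => differentiable_const (1:ℝ) x)
    (fun x _ => (hcomp x).differentiableAt)
  simp only [one_mul, fderiv_const] at key
  simp only [hfe] at key
  simpa using key

lemma aux_divg_eq_zero_of_nmem {Ω : Set E2} {ξ : E2 → E2} (hsub : tsupport ξ ⊆ Ω)
    {x : E2} (hx : x ∉ Ω) : divg ξ x = 0 := by
  have hx' : x ∉ tsupport ξ := fun h => hx (hsub h)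
  have hev : ξ =ᶠ[nhds x] (fun _ => 0) :=
    eventually_of_mem ((isClosed_tsupport ξ).isOpen_compl.mem_nhds hx')
      (fun y hy => image_eq_zero_of_notMem_tsupport hy)
  have : fderiv ℝ ξ x = 0 := by
    rw [hev.fderiv_eq]; exact fderiv_const_apply 0
  simp [divg, this]

/-- Divergence theorem: the integral of the divergence of a test field vanishes. -/
lemma aux_divg_intΩ_zero {Ω : Set E2} {ξ : E2 → E2} (hξ : IsTestField Ω ξ) :
    ∫ x, divg ξ x ∂(μΩ Ω) = 0 := by
  obtain ⟨hcd, hcs, hsub, -⟩ := hξ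
  have h1 : ∫ x, divg ξ x ∂(μΩ Ω) = ∫ x, divg ξ x ∂(volume : Measure E2) :=
    setIntegral_eq_integral_of_forall_compl_eq_zero
      (fun x hx => aux_divg_eq_zero_of_nmem hsub hx)
  rw [h1]
  have : ∫ x, divg ξ x ∂(volume : Measure E2)
      = ∑ i : Fin 2, ∫ x, fderiv ℝ ξ x (EuclideanSpace.single i 1) i
          ∂(volume : Measure E2) := by
    rw [← integral_finset_sum]
    · rfl
    · exact fun i _ =>
        (aux_Dcont hcd _ i).integrable_of_hasCompactSupport (aux_Dhcs hcs _ i)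
  rw [this]
  simp [aux_Dint_zero hcd hcs]

lemma aux_divg_cont {ξ : E2 → E2} (hcd : ContDiff ℝ 1 ξ) : Continuous (divg ξ) := by
  refine continuous_finset_sum _ (fun i _ => ?_)
  exact aux_Dcont hcd _ i

lemma aux_divg_hcs {ξ : E2 → E2} (hcs : HasCompactSupport ξ) :
    HasCompactSupport (divg ξ) := by
  have := (hcs.fderiv (𝕜 := ℝ))
  exact this.comp_left
    (g := fun L : E2 →L[ℝ] E2 => ∑ i : Fin 2, L (EuclideanSpace.single i 1) i) (by simp)

/-- Total variation decreases along the segment from `u` to a constant. -/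
lemma aux_TV_line {Ω : Set E2} (hΩb : Bornology.IsBounded Ω) (u o : LpΩ Ω)
    (ho : IsOneFun Ω o) (c t : ℝ) (ht0 : 0 ≤ t) (ht1 : t ≤ 1) :
    TV Ω ((1-t)•u + t•(c•o)) ≤ TV Ω u := by
  haveI : IsFiniteMeasure (μΩ Ω) :=
    ⟨by rw [Measure.restrict_apply_univ]; exact hΩb.measure_lt_top⟩
  refine iSup_le (fun ξ => ?_)
  have hu1 : Integrable (u : E2 → ℝ) (μΩ Ω) := (Lp.memLp u).integrable (by norm_num)
  have hdc := aux_divg_cont ξ.2.1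
  have hdhcs := aux_divg_hcs ξ.2.2.1
  obtain ⟨C, hC⟩ := hdhcs.exists_bound_of_continuous hdc
  have hud : Integrable (fun x => (u : E2 → ℝ) x * divg ξ.1 x) (μΩ Ω) := by
    have := hu1.bdd_mul (hdc.aestronglyMeasurable) (Eventually.of_forall hC)
    simpa [mul_comm] using this
  have hd1 : Integrable (divg ξ.1) (μΩ Ω) :=
    (hdc.integrable_of_hasCompactSupport hdhcs).restrict
  have hco : (((1-t)•u + t•(c•o) : LpΩ Ω) : E2 → ℝ)
      =ᵐ[μΩ Ω] fun x => (1-t) * (u : E2 → ℝ) x + t * c := by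
    filter_upwards [Lp.coeFn_add ((1-t)•u) (t•(c•o)), Lp.coeFn_smul (1-t) u,
      Lp.coeFn_smul t (c•o), Lp.coeFn_smul c o, ho] with x h1 h2 h3 h4 h5
    rw [h1, Pi.add_apply, h2, h3]
    simp only [Pi.smul_apply, smul_eq_mul]
    rw [h4]
    simp only [Pi.smul_apply, smul_eq_mul, h5, mul_one]
  have hIeq : ∫ x, (((1-t)•u + t•(c•o) : LpΩ Ω) : E2 → ℝ) x * divg ξ.1 x ∂(μΩ Ω)
      = (1-t) * ∫ x, (u : E2 → ℝ) x * divg ξ.1 x ∂(μΩ Ω) := by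
    rw [integral_congr_ae (by filter_upwards [hco] with x hx; rw [hx])]
    have : ∀ x, ((1-t) * (u : E2 → ℝ) x + t * c) * divg ξ.1 x
        = (1-t) * ((u : E2 → ℝ) x * divg ξ.1 x) + (t*c) * divg ξ.1 x := by
      intro x; ring
    simp_rw [this]
    rw [integral_add (hud.const_mul _) (hd1.const_mul _), integral_const_mul,
      integral_const_mul, aux_divg_intΩ_zero ξ.2, mul_zero, add_zero]
  rw [hIeq]
  set I := ∫ x, (u : E2 → ℝ) x * divg ξ.1 x ∂(μΩ Ω) with hI
  rcases le_or_gt I 0 with h | h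
  · have : (1-t) * I ≤ 0 := mul_nonpos_of_nonneg_of_nonpos (by linarith) h
    simp [ENNReal.ofReal_of_nonpos this]
  · refine le_iSup_of_le ξ (ENNReal.ofReal_le_ofReal ?_)
    exact mul_le_of_le_one_left h.le (by linarith)

end Aux

/-- If `T 1_Ω = 1_Ω`, `ν_τ|Ω| ≤ ‖g - g_Ω‖_{L^τ}^τ` and the
inequality-constrained problem admits a solution, then the equality-constrained problem
admits a solution and both problems have the same optimal value. -/
theorem stmt1 (Ω : Set E2) (hΩo : IsOpen Ω) (hΩb : Bornology.IsBounded Ω)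
    (hΩpos : 0 < MeasureTheory.volume Ω)
    (τ : ℕ) (hτ : τ = 1 ∨ τ = 2)
    (T : LpΩ Ω →L[ℝ] LpΩ Ω) (g : LpΩ Ω) (ν : ℝ) (hν : 0 < ν)
    (o : LpΩ Ω) (ho : IsOneFun Ω o) (hTo : T o = o)
    (hνg : ν * (MeasureTheory.volume Ω).toReal ≤ gMeanDist Ω τ g)
    (hineq : ∃ us : LpΩ Ω, TV Ω us < ⊤ ∧ Hfid Ω τ T g us ≤ Bval Ω τ ν ∧
      ∀ u : LpΩ Ω, TV Ω u < ⊤ → Hfid Ω τ T g u ≤ Bval Ω τ ν → TV Ω us ≤ TV Ω u) :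
    (∃ ue : LpΩ Ω, TV Ω ue < ⊤ ∧ Hfid Ω τ T g ue = Bval Ω τ ν ∧
      ∀ u : LpΩ Ω, TV Ω u < ⊤ → Hfid Ω τ T g u = Bval Ω τ ν → TV Ω ue ≤ TV Ω u) ∧
    (⨅ u : {u : LpΩ Ω // TV Ω u < ⊤ ∧ Hfid Ω τ T g u ≤ Bval Ω τ ν}, TV Ω u.1) =
      (⨅ u : {u : LpΩ Ω // TV Ω u < ⊤ ∧ Hfid Ω τ T g u = Bval Ω τ ν}, TV Ω u.1) := by
  haveI : IsFiniteMeasure (μΩ Ω) :=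
    ⟨by rw [Measure.restrict_apply_univ]; exact hΩb.measure_lt_top⟩
  obtain ⟨us, hTVus, hHus, hmin⟩ := hineq
  have hτpos : (0:ℝ) < (τ:ℝ) := by rcases hτ with h | h <;> norm_num [h]
  set c := meanG Ω g with hc
  set A : LpΩ Ω := T us - g with hA
  set Z : LpΩ Ω := c•o - T us with hZ
  set w : ℝ → LpΩ Ω := fun t => (1-t)•us + t•(c•o) with hw
  have hTco : T (c•o) = c•o := by rw [_root_.map_smul, hTo]
  have hwt : ∀ t, T (w t) - g = A + t•Z := by
    intro t
    show T ((1-t)•us + t•(c•o)) - g = (T us - g) + t•(c•o - T us)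
    rw [map_add, _root_.map_smul, _root_.map_smul, hTco]
    module
  -- the fidelity along the segment
  have hcoe : ∀ t : ℝ, ((A + t•Z : LpΩ Ω) : E2 → ℝ)
      =ᵐ[μΩ Ω] fun x => (A : E2 → ℝ) x + t * (Z : E2 → ℝ) x := by
    intro t
    filter_upwards [Lp.coeFn_add A (t•Z), Lp.coeFn_smul t Z] with x h1 h2
    rw [h1, Pi.add_apply, h2]
    simp
  set F : ℝ → ℝ := fun t => ∫ x, |(A : E2 → ℝ) x + t * (Z : E2 → ℝ) x| ^ τ ∂(μΩ Ω) with hF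
  have hHw : ∀ t, Hfid Ω τ T g (w t) = (1/(τ:ℝ)) * F t := by
    intro t
    rw [Hfid, hwt t]
    congr 1
    exact integral_congr_ae (by filter_upwards [hcoe t] with x hx; rw [hx])
  -- measurability and integrable bound
  have hAm := Lp.aestronglyMeasurable A
  have hZm := Lp.aestronglyMeasurable Z
  have hbound_int : Integrable
      (fun x => (|(A : E2 → ℝ) x| + |(Z : E2 → ℝ) x|) ^ τ) (μΩ Ω) := by
    rcases hτ with h | h
    · subst h
      simpa [Pi.add_def] using (((Lp.memLp A).integrable one_le_two).abs.add
        ((Lp.memLp Z).integrable one_le_two).abs)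
    · subst h
      have hm : MemLp (fun x => |(A : E2 → ℝ) x| + |(Z : E2 → ℝ) x|) 2 (μΩ Ω) := by
        have := ((Lp.memLp A).norm.add (Lp.memLp Z).norm)
        simpa [Real.norm_eq_abs, Pi.add_def] using this
      simpa using hm.integrable_sq
  have hFcont : ContinuousOn F (Set.Icc (0:ℝ) 1) := by
    rw [continuousOn_iff_continuous_restrict]
    refine continuous_of_dominated (F := fun (t : Set.Icc (0:ℝ) 1) x =>
        |(A : E2 → ℝ) x + (t:ℝ) * (Z : E2 → ℝ) x| ^ τ)
      (bound := fun x => (|(A : E2 → ℝ) x| + |(Z : E2 → ℝ) x|) ^ τ)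
      (fun t => ?_) (fun t => ?_) hbound_int ?_
    · exact ((continuous_abs.pow τ).comp_aestronglyMeasurable
        (hAm.add (hZm.const_mul (t:ℝ))))
    · refine Eventually.of_forall (fun x => ?_)
      rw [Real.norm_eq_abs, abs_pow, abs_abs]
      refine pow_le_pow_left₀ (abs_nonneg _) ?_ τ
      have ht : |(t:ℝ)| ≤ 1 := abs_le.mpr ⟨by linarith [t.2.1], t.2.2⟩
      calc |(A : E2 → ℝ) x + (t:ℝ) * (Z : E2 → ℝ) x|
          ≤ |(A : E2 → ℝ) x| + |(t:ℝ) * (Z : E2 → ℝ) x| := abs_add_le _ _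
        _ ≤ |(A : E2 → ℝ) x| + |(Z : E2 → ℝ) x| := by
            rw [abs_mul]
            nlinarith [abs_nonneg ((Z : E2 → ℝ) x)]
    · refine Eventually.of_forall (fun x => ?_)
      exact ((continuous_const.add
        (continuous_subtype_val.mul continuous_const)).abs.pow τ)
  -- endpoints
  have hw0 : w 0 = us := by simp [hw]
  have hw1 : w 1 = c•o := by simp [hw]
  have hH1 : Hfid Ω τ T g (c•o) = (1/(τ:ℝ)) * gMeanDist Ω τ g := by
    rw [Hfid, gMeanDist]
    congr 1
    have h1 : T (c•o) - g = c•o - g := by rw [hTco]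
    rw [h1]
    refine integral_congr_ae ?_
    filter_upwards [Lp.coeFn_sub (c•o) g, Lp.coeFn_smul c o, ho] with x hx1 hx2 hx3
    rw [hx1, Pi.sub_apply, hx2]
    simp only [Pi.smul_apply, smul_eq_mul, hx3, mul_one]
    rw [abs_sub_comm]
  have hB1 : Bval Ω τ ν ≤ Hfid Ω τ T g (c•o) := by
    rw [hH1]
    show (ν / (τ:ℝ)) * (MeasureTheory.volume Ω).toReal ≤ _
    calc (ν / (τ:ℝ)) * (MeasureTheory.volume Ω).toReal
        = (ν * (MeasureTheory.volume Ω).toReal) / (τ:ℝ) := by ring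
      _ ≤ gMeanDist Ω τ g / (τ:ℝ) := by gcongr
      _ = (1/(τ:ℝ)) * gMeanDist Ω τ g := by ring
  -- intermediate value theorem
  have hfcont : ContinuousOn (fun t => Hfid Ω τ T g (w t)) (Set.Icc (0:ℝ) 1) := by
    have : (fun t => Hfid Ω τ T g (w t)) = fun t => (1/(τ:ℝ)) * F t := funext hHw
    rw [this]
    exact continuousOn_const.mul hFcont
  have hmem : Bval Ω τ ν ∈ Set.Icc (Hfid Ω τ T g (w 0)) (Hfid Ω τ T g (w 1)) :=
    ⟨by rw [hw0]; exact hHus, by rw [hw1]; exact hB1⟩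
  obtain ⟨t, htI, htB⟩ := intermediate_value_Icc (by norm_num : (0:ℝ) ≤ 1) hfcont hmem
  -- conclusion
  have hTVwt : TV Ω (w t) ≤ TV Ω us := aux_TV_line hΩb us o ho c t htI.1 htI.2
  have hTVwt_lt : TV Ω (w t) < ⊤ := lt_of_le_of_lt hTVwt hTVus
  have hue_min : ∀ u, TV Ω u < ⊤ → Hfid Ω τ T g u = Bval Ω τ ν → TV Ω (w t) ≤ TV Ω u :=
    fun u hu hHu => hTVwt.trans (hmin u hu hHu.le)
  refine ⟨⟨w t, hTVwt_lt, htB, hue_min⟩, ?_⟩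
  have hTVeq : TV Ω (w t) = TV Ω us := le_antisymm hTVwt (hmin _ hTVwt_lt htB.le)
  apply le_antisymm
  · exact le_iInf fun u => iInf_le_of_le ⟨u.1, u.2.1, u.2.2.le⟩ le_rfl
  · refine le_iInf fun u => ?_
    refine le_trans (iInf_le _ ⟨w t, hTVwt_lt, htB⟩) ?_
    rw [hTVeq]
    exact hmin u.1 u.2.1 u.2.2

end
end

section
/- Let g ∈ L²(Ω), let α₁, α₂ > 0, and define E(u,α) := ‖u − g‖_{L²(Ω)}² + α·TV(u). If u_{α_i} minimizes E(·,α_i) over {u ∈ L²(Ω) : TV(u) < ∞} for i = 1,2, then ‖u_{α₁} − u_{α₂}‖_{L²(Ω)}² ≤ ((α₂ − α₁)/(α₁ + α₂))·(‖u_{α₂} − g‖_{L²(Ω)}² − ‖u_{α₁} − g‖_{L²(Ω)}²). -/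
open MeasureTheory Filter
open scoped ENNReal NNReal

noncomputable section

/-- The denoising energy `E(u,α) = ‖u-g‖²_{L²} + α·TV(u)` (valued in `ℝ≥0∞`). -/
def Efun (Ω : Set E2) (g : LpΩ Ω) (α : ℝ) (u : LpΩ Ω) : ℝ≥0∞ :=
  ENNReal.ofReal (‖u - g‖ ^ 2) + ENNReal.ofReal α * TV Ω u

open scoped RealInnerProductSpace

lemma divg_continuous {ξ : E2 → E2} (hξ : ContDiff ℝ 1 ξ) : Continuous (divg ξ) := by
  unfold divg
  refine continuous_finset_sum _ fun i _ => ?_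
  exact (EuclideanSpace.proj i).continuous.comp
    ((hξ.continuous_fderiv one_ne_zero).clm_apply continuous_const)

lemma divg_hcs {ξ : E2 → E2} (h : HasCompactSupport ξ) : HasCompactSupport (divg ξ) := by
  have h1 : HasCompactSupport (fderiv ℝ ξ) := h.fderiv (𝕜 := ℝ)
  exact h1.comp_left (g := fun L : E2 →L[ℝ] E2 => ∑ i : Fin 2, L (EuclideanSpace.single i 1) i)
    (by simp)

lemma integrable_mul_divg {Ω : Set E2} [IsFiniteMeasure (μΩ Ω)] (u : LpΩ Ω)
    {ξ : E2 → E2} (hξ : IsTestField Ω ξ) :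
    Integrable (fun x => u x * divg ξ x) (μΩ Ω) := by
  have hu : Integrable u (μΩ Ω) := (Lp.memLp u).integrable one_le_two
  have hcont := divg_continuous hξ.1
  have hb := (divg_hcs hξ.2.1).exists_bound_of_continuous hcont
  have := hu.bdd_mul (hcont.aestronglyMeasurable) (ae_of_all _ hb.choose_spec)
  simpa [mul_comm] using this

lemma integral_le_TV {Ω : Set E2} {u : LpΩ Ω} (hu : TV Ω u < ⊤)
    (ξ : {ξ : E2 → E2 // IsTestField Ω ξ}) :
    ∫ x, u x * divg ξ.1 x ∂(μΩ Ω) ≤ (TV Ω u).toReal := by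
  rcases le_or_gt (∫ x, u x * divg ξ.1 x ∂(μΩ Ω)) 0 with h | h
  · exact h.trans ENNReal.toReal_nonneg
  · have h1 : ENNReal.ofReal (∫ x, u x * divg ξ.1 x ∂(μΩ Ω)) ≤ TV Ω u :=
      le_iSup (fun ξ : {ξ : E2 → E2 // IsTestField Ω ξ} =>
        ENNReal.ofReal (∫ x, u x * divg ξ.1 x ∂(μΩ Ω))) ξ
    rw [← ENNReal.ofReal_toReal hu.ne] at h1
    exact (ENNReal.ofReal_le_ofReal_iff ENNReal.toReal_nonneg).mp h1

lemma TV_combo {Ω : Set E2} [IsFiniteMeasure (μΩ Ω)] {u w : LpΩ Ω}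
    (hu : TV Ω u < ⊤) (hw : TV Ω w < ⊤) {t : ℝ} (ht0 : 0 ≤ t) (ht1 : t ≤ 1) :
    TV Ω (u + t • (w - u)) ≤
      ENNReal.ofReal ((1 - t) * (TV Ω u).toReal + t * (TV Ω w).toReal) := by
  refine iSup_le fun ξ => ENNReal.ofReal_le_ofReal ?_
  have hcoe : ∀ᵐ x ∂(μΩ Ω), (u + t • (w - u) : LpΩ Ω) x = u x + t * (w x - u x) := by
    filter_upwards [Lp.coeFn_add u (t • (w - u)), Lp.coeFn_smul t (w - u),
      Lp.coeFn_sub w u] with x h1 h2 h3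
    simp only [Pi.add_apply] at h1
    rw [h1, h2, Pi.smul_apply, h3, Pi.sub_apply, smul_eq_mul]
  have hiu := integrable_mul_divg u ξ.2
  have hiw := integrable_mul_divg w ξ.2
  have heq : ∫ x, (u + t • (w - u) : LpΩ Ω) x * divg ξ.1 x ∂(μΩ Ω)
      = (1 - t) * ∫ x, u x * divg ξ.1 x ∂(μΩ Ω) + t * ∫ x, w x * divg ξ.1 x ∂(μΩ Ω) := by
    rw [integral_congr_ae (g := fun x => (1 - t) * (u x * divg ξ.1 x) + t * (w x * divg ξ.1 x))
      (by filter_upwards [hcoe] with x hx; rw [hx]; ring)]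
    rw [integral_add (hiu.const_mul _) (hiw.const_mul _), integral_const_mul, integral_const_mul]
  rw [heq]
  have h1t : (0:ℝ) ≤ 1 - t := by linarith
  exact add_le_add (mul_le_mul_of_nonneg_left (integral_le_TV hu ξ) h1t)
    (mul_le_mul_of_nonneg_left (integral_le_TV hw ξ) ht0)

lemma key_ineq {Ω : Set E2} [IsFiniteMeasure (μΩ Ω)] (g u w : LpΩ Ω) {α : ℝ} (hα : 0 < α)
    (hTVu : TV Ω u < ⊤) (hTVw : TV Ω w < ⊤)
    (hmin : ∀ v, TV Ω v < ⊤ → Efun Ω g α u ≤ Efun Ω g α v) :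
    α * ((TV Ω u).toReal - (TV Ω w).toReal) ≤ 2 * ⟪u - g, w - u⟫ := by
  set Tu := (TV Ω u).toReal with hTu
  set Tw := (TV Ω w).toReal with hTw
  have hTu0 : 0 ≤ Tu := ENNReal.toReal_nonneg
  have hTw0 : 0 ≤ Tw := ENNReal.toReal_nonneg
  set b := w - u with hb
  set ip := ⟪u - g, b⟫ with hip
  set nb := ‖b‖ ^ 2 with hnb
  have hnb0 : 0 ≤ nb := sq_nonneg _
  suffices h : ∀ t : ℝ, 0 < t → t ≤ 1 → α * (Tu - Tw) ≤ 2 * ip + t * nb by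
    by_contra hc
    push_neg at hc
    set ε := α * (Tu - Tw) - 2 * ip with hε
    have hε0 : 0 < ε := by simp only [hε]; linarith
    set t := min 1 (ε / (2 * (nb + 1))) with ht
    have ht0 : 0 < t := lt_min one_pos (div_pos hε0 (by positivity))
    have h1 := h t ht0 (min_le_left _ _)
    have h2 : t * nb < ε := by
      have h3 : t ≤ ε / (2 * (nb + 1)) := min_le_right _ _
      have h4 : t * nb ≤ (ε / (2 * (nb + 1))) * nb :=
        mul_le_mul_of_nonneg_right h3 hnb0
      have h5 : (ε / (2 * (nb + 1))) * nb < ε := by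
        rw [div_mul_eq_mul_div, div_lt_iff₀ (by positivity)]
        nlinarith
      linarith
    linarith
  intro t ht0 ht1
  set v := u + t • b with hv
  set M := (1 - t) * Tu + t * Tw with hM
  have hM0 : 0 ≤ M := by
    have : (0:ℝ) ≤ 1 - t := by linarith
    positivity
  have hTVv : TV Ω v ≤ ENNReal.ofReal M := TV_combo hTVu hTVw ht0.le ht1
  have hEv := hmin v (lt_of_le_of_lt hTVv ENNReal.ofReal_lt_top)
  -- convert to real inequality
  have hEu : Efun Ω g α u = ENNReal.ofReal (‖u - g‖ ^ 2 + α * Tu) := by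
    rw [Efun, ← ENNReal.ofReal_toReal hTVu.ne, ← hTu, ← ENNReal.ofReal_mul hα.le,
      ← ENNReal.ofReal_add (by positivity) (by positivity)]
  have hEvle : Efun Ω g α v ≤ ENNReal.ofReal (‖v - g‖ ^ 2 + α * M) := by
    rw [Efun, ENNReal.ofReal_add (by positivity) (by positivity), ENNReal.ofReal_mul hα.le]
    exact add_le_add le_rfl (mul_le_mul_right hTVv _)
  have hreal : ‖u - g‖ ^ 2 + α * Tu ≤ ‖v - g‖ ^ 2 + α * M := by
    have := hEv.trans hEvle
    rw [hEu] at this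
    exact (ENNReal.ofReal_le_ofReal_iff (by positivity)).mp this
  have hvg : v - g = (u - g) + t • b := by rw [hv]; abel
  have hnorm : ‖v - g‖ ^ 2 = ‖u - g‖ ^ 2 + 2 * (t * ip) + t ^ 2 * nb := by
    rw [hvg, norm_add_sq_real, real_inner_smul_right, hnb, norm_smul, Real.norm_eq_abs,
      abs_of_pos ht0, mul_pow, ← hip]
  rw [hnorm, hM] at hreal
  have hkey : t * (α * (Tu - Tw)) ≤ t * (2 * ip + t * nb) := by nlinarith [hreal]
  exact le_of_mul_le_mul_left (by linarith) ht0

/-- Stability estimate for minimizers of the denoising energy. -/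
theorem stmt4 (Ω : Set E2) (hΩo : IsOpen Ω) (hΩb : Bornology.IsBounded Ω)
    (hΩpos : 0 < MeasureTheory.volume Ω)
    (g : LpΩ Ω) (α₁ α₂ : ℝ) (hα₁ : 0 < α₁) (hα₂ : 0 < α₂)
    (u₁ u₂ : LpΩ Ω)
    (hu₁ : TV Ω u₁ < ⊤ ∧ ∀ v, TV Ω v < ⊤ → Efun Ω g α₁ u₁ ≤ Efun Ω g α₁ v)
    (hu₂ : TV Ω u₂ < ⊤ ∧ ∀ v, TV Ω v < ⊤ → Efun Ω g α₂ u₂ ≤ Efun Ω g α₂ v) :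
    ‖u₁ - u₂‖ ^ 2 ≤ ((α₂ - α₁) / (α₁ + α₂)) * (‖u₂ - g‖ ^ 2 - ‖u₁ - g‖ ^ 2) := by
  haveI : IsFiniteMeasure (μΩ Ω) :=
    ⟨by rw [Measure.restrict_apply_univ]; exact hΩb.measure_lt_top⟩
  obtain ⟨hT1, hmin1⟩ := hu₁
  obtain ⟨hT2, hmin2⟩ := hu₂
  have key1 := key_ineq g u₁ u₂ hα₁ hT1 hT2 hmin1
  have key2 := key_ineq g u₂ u₁ hα₂ hT2 hT1 hmin2
  set d := u₁ - u₂ with hd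
  set s1 : ℝ := ⟪u₁ - g, d⟫ with hs1
  set s2 : ℝ := ⟪u₂ - g, d⟫ with hs2
  set nd := ‖d‖ ^ 2 with hnd
  have e1 : ⟪u₁ - g, u₂ - u₁⟫ = -s1 := by
    rw [hs1, ← inner_neg_right]
    congr 1
    rw [hd]; abel
  rw [e1] at key1
  have e3 : s1 = s2 + nd := by
    have hug : u₁ - g = (u₂ - g) + d := by rw [hd]; abel
    rw [hs1, hs2, hnd, hug, inner_add_left, real_inner_self_eq_norm_sq]
  have e4' : ∀ a c : LpΩ Ω, (⟪a, a - c⟫ + ⟪c, a - c⟫ : ℝ) = ‖a‖ ^ 2 - ‖c‖ ^ 2 := by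
    intro a c
    rw [inner_sub_right, inner_sub_right, real_inner_self_eq_norm_sq,
      real_inner_self_eq_norm_sq, real_inner_comm c a]
    ring
  have e4 : s1 + s2 = ‖u₁ - g‖ ^ 2 - ‖u₂ - g‖ ^ 2 := by
    have hdd : d = (u₁ - g) - (u₂ - g) := by rw [hd]; abel
    rw [hs1, hs2, hdd]
    exact e4' (u₁ - g) (u₂ - g)
  have m1 := mul_le_mul_of_nonneg_left key1 hα₂.le
  have m2 := mul_le_mul_of_nonneg_left key2 hα₁.le
  have hmono : α₂ * s1 ≤ α₁ * s2 := by nlinarith [m1, m2]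
  have h3 : α₂ * s1 = α₂ * s2 + α₂ * nd := by rw [e3]; ring
  have h4 : α₁ * s1 = α₁ * s2 + α₁ * nd := by rw [e3]; ring
  have h5 : α₁ * (s1 + s2) = α₁ * (‖u₁ - g‖ ^ 2 - ‖u₂ - g‖ ^ 2) := by rw [e4]
  have h6 : α₂ * (s1 + s2) = α₂ * (‖u₁ - g‖ ^ 2 - ‖u₂ - g‖ ^ 2) := by rw [e4]
  rw [div_mul_eq_mul_div, le_div_iff₀ (by linarith)]
  nlinarith [hmono, h3, h4, h5, h6]


end
end

section
/- Let T : L²(Ω) → L²(Ω) be bounded linear and g ∈ L²(Ω), and suppose there exists a constant c > 0 such that ‖T*(Tu − g)‖_{L²(Ω)} = c·‖Tu − g‖_{L²(Ω)} for all u ∈ L²(Ω), where T* is the adjoint of T. If 0 < α ≤ β and u_α, u_β minimize J₂(·,α) and J₂(·,β) respectively over {u ∈ L²(Ω) : TV(u) < ∞}, then √(H₂(u_β;g))/β ≤ √(H₂(u_α;g))/α; i.e., the function α ↦ √(H₂(u_α;g))/α is non-increasing. -/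
open MeasureTheory Filter
open scoped ENNReal NNReal

noncomputable section

open scoped RealInnerProductSpace

section AuxStmt10

variable {Ω : Set E2}

lemma stmt10_integrable (hΩb : Bornology.IsBounded Ω) (u : LpΩ Ω) {ξ : E2 → E2}
    (hξ : IsTestField Ω ξ) : Integrable (fun x => u x * divg ξ x) (μΩ Ω) := by
  haveI : IsFiniteMeasure (μΩ Ω) :=
    ⟨by rw [Measure.restrict_apply_univ]; exact hΩb.measure_lt_top⟩
  obtain ⟨h1, h2, h3, h4⟩ := hξ
  have hfc : Continuous (fderiv ℝ ξ) := h1.continuous_fderiv one_ne_zero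
  have hdc : Continuous (divg ξ) := by
    unfold divg
    exact continuous_finset_sum _ fun i _ =>
      (EuclideanSpace.proj i).continuous.comp (hfc.clm_apply continuous_const)
  have hcs : HasCompactSupport (divg ξ) := by
    have hfd : HasCompactSupport (fderiv ℝ ξ) := h2.fderiv (𝕜 := ℝ)
    apply hfd.mono
    intro x hx
    simp only [Function.mem_support] at hx ⊢
    intro h; apply hx; unfold divg; simp [h]
  obtain ⟨C, hC⟩ := hcs.exists_bound_of_continuous hdc
  have hu : Integrable (fun x => u x) (μΩ Ω) :=
    (Lp.memLp u).integrable (by norm_num)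
  exact (hu.bdd_mul hdc.aestronglyMeasurable (Eventually.of_forall hC)).congr
    (Eventually.of_forall fun x => mul_comm _ _)

lemma stmt10_TV_combo (hΩb : Bornology.IsBounded Ω) {s t : ℝ} (hs : 0 ≤ s) (ht : 0 ≤ t)
    (u w : LpΩ Ω) :
    TV Ω (s • u + t • w) ≤ ENNReal.ofReal s * TV Ω u + ENNReal.ofReal t * TV Ω w := by
  refine iSup_le fun ξ => ?_
  have hu := stmt10_integrable hΩb u ξ.2
  have hw := stmt10_integrable hΩb w ξ.2
  have hae : (fun x => (s • u + t • w : LpΩ Ω) x * divg ξ.1 x)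
      =ᵐ[μΩ Ω] fun x => s * (u x * divg ξ.1 x) + t * (w x * divg ξ.1 x) := by
    filter_upwards [Lp.coeFn_add (s • u) (t • w), Lp.coeFn_smul s u, Lp.coeFn_smul t w]
      with x h1 h2 h3
    simp only [Pi.add_apply, Pi.smul_apply, smul_eq_mul] at h1 h2 h3
    rw [h1, h2, h3]; ring
  rw [integral_congr_ae hae, integral_add (hu.const_mul s) (hw.const_mul t),
    integral_const_mul, integral_const_mul]
  refine le_trans ENNReal.ofReal_add_le (add_le_add ?_ ?_)
  · rw [ENNReal.ofReal_mul hs]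
    exact mul_le_mul_right
      (le_iSup (fun ξ' : {ξ : E2 → E2 // IsTestField Ω ξ} =>
        ENNReal.ofReal (∫ x, u x * divg ξ'.1 x ∂(μΩ Ω))) ξ) _
  · rw [ENNReal.ofReal_mul ht]
    exact mul_le_mul_right
      (le_iSup (fun ξ' : {ξ : E2 → E2 // IsTestField Ω ξ} =>
        ENNReal.ofReal (∫ x, w x * divg ξ'.1 x ∂(μΩ Ω))) ξ) _

lemma stmt10_Hfid_eq (T : LpΩ Ω →L[ℝ] LpΩ Ω) (g u : LpΩ Ω) :
    Hfid Ω 2 T g u = 1 / 2 * ‖T u - g‖ ^ 2 := by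
  unfold Hfid
  have h1 : (∫ x, |(T u - g : LpΩ Ω) x| ^ 2 ∂(μΩ Ω))
      = ∫ x, (T u - g : LpΩ Ω) x * (T u - g : LpΩ Ω) x ∂(μΩ Ω) := by
    simp only [pow_two, abs_mul_abs_self]
  have h2 : ⟪(T u - g : LpΩ Ω), (T u - g : LpΩ Ω)⟫
      = ∫ x, (T u - g : LpΩ Ω) x * (T u - g : LpΩ Ω) x ∂(μΩ Ω) := by
    rw [MeasureTheory.L2.inner_def]
    simp [RCLike.inner_apply, conj_trivial]
    simp only [pow_two]
  rw [h1, ← h2, real_inner_self_eq_norm_sq]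
  norm_num

lemma stmt10_Hfid_nonneg (T : LpΩ Ω →L[ℝ] LpΩ Ω) (g u : LpΩ Ω) :
    0 ≤ Hfid Ω 2 T g u := by
  rw [stmt10_Hfid_eq]; positivity

lemma stmt10_jmin_le {T : LpΩ Ω →L[ℝ] LpΩ Ω} {g : LpΩ Ω} {α : ℝ} (hα : 0 ≤ α)
    {u : LpΩ Ω} (hu : IsJMin Ω 2 T g α u) {v : LpΩ Ω} (hv : TV Ω v < ⊤) :
    Hfid Ω 2 T g u + α * (TV Ω u).toReal ≤ Hfid Ω 2 T g v + α * (TV Ω v).toReal := by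
  have h := hu.2 v hv
  unfold Jfun at h
  have e : ∀ w : LpΩ Ω, TV Ω w < ⊤ →
      ENNReal.ofReal (Hfid Ω 2 T g w) + ENNReal.ofReal α * TV Ω w
        = ENNReal.ofReal (Hfid Ω 2 T g w + α * (TV Ω w).toReal) := by
    intro w hw
    rw [← ENNReal.ofReal_toReal hw.ne, ← ENNReal.ofReal_mul hα,
      ← ENNReal.ofReal_add (stmt10_Hfid_nonneg T g w)
        (mul_nonneg hα ENNReal.toReal_nonneg), ENNReal.ofReal_toReal hw.ne]
  rw [e u hu.1, e v hv] at h
  exact (ENNReal.ofReal_le_ofReal_iff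
    (add_nonneg (stmt10_Hfid_nonneg T g v) (mul_nonneg hα ENNReal.toReal_nonneg))).mp h

lemma stmt10_varIneq (hΩb : Bornology.IsBounded Ω) (T : LpΩ Ω →L[ℝ] LpΩ Ω) (g : LpΩ Ω)
    {α : ℝ} (hα : 0 < α) {u : LpΩ Ω} (hu : IsJMin Ω 2 T g α u)
    {w : LpΩ Ω} (hw : TV Ω w < ⊤) :
    α * ((TV Ω u).toReal - (TV Ω w).toReal) ≤ ⟪T u - g, T (w - u)⟫ := by
  have key : ∀ t : ℝ, 0 < t → t ≤ 1 →
      0 ≤ ⟪T u - g, T (w - u)⟫ + t * (‖T (w - u)‖ ^ 2 / 2)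
        + α * ((TV Ω w).toReal - (TV Ω u).toReal) := by
    intro t ht0 ht1
    have hcombo : u + t • (w - u) = (1 - t) • u + t • w := by
      rw [smul_sub, sub_smul, one_smul]; abel
    have hTVv : TV Ω (u + t • (w - u))
        ≤ ENNReal.ofReal (1 - t) * TV Ω u + ENNReal.ofReal t * TV Ω w := by
      rw [hcombo]; exact stmt10_TV_combo hΩb (by linarith) ht0.le u w
    have hrhs_ne : ENNReal.ofReal (1 - t) * TV Ω u + ENNReal.ofReal t * TV Ω w ≠ ⊤ :=
      ENNReal.add_ne_top.mpr
        ⟨ENNReal.mul_ne_top ENNReal.ofReal_ne_top hu.1.ne,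
         ENNReal.mul_ne_top ENNReal.ofReal_ne_top hw.ne⟩
    have hTVv_lt : TV Ω (u + t • (w - u)) < ⊤ :=
      lt_of_le_of_lt hTVv (lt_top_iff_ne_top.mpr hrhs_ne)
    have hTVv_real : (TV Ω (u + t • (w - u))).toReal
        ≤ (1 - t) * (TV Ω u).toReal + t * (TV Ω w).toReal := by
      have h' := ENNReal.toReal_mono hrhs_ne hTVv
      rwa [ENNReal.toReal_add (ENNReal.mul_ne_top ENNReal.ofReal_ne_top hu.1.ne)
        (ENNReal.mul_ne_top ENNReal.ofReal_ne_top hw.ne), ENNReal.toReal_mul,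
        ENNReal.toReal_mul, ENNReal.toReal_ofReal (by linarith),
        ENNReal.toReal_ofReal ht0.le] at h'
    have hmin := stmt10_jmin_le hα.le hu hTVv_lt
    have hTv : (T (u + t • (w - u)) - g : LpΩ Ω) = (T u - g) + t • T (w - u) := by
      rw [map_add, ContinuousLinearMap.map_smul]
      exact add_sub_right_comm _ _ _
    have hHv : Hfid Ω 2 T g (u + t • (w - u))
        = 1 / 2 * ‖T u - g‖ ^ 2 + t * ⟪T u - g, T (w - u)⟫
          + t ^ 2 * (‖T (w - u)‖ ^ 2 / 2) := by
      rw [stmt10_Hfid_eq, hTv, norm_add_sq_real, real_inner_smul_right, norm_smul]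
      simp only [Real.norm_eq_abs, mul_pow, sq_abs]
      ring
    rw [stmt10_Hfid_eq T g u, hHv] at hmin
    have h3 : 0 ≤ t * (⟪T u - g, T (w - u)⟫ + t * (‖T (w - u)‖ ^ 2 / 2)
        + α * ((TV Ω w).toReal - (TV Ω u).toReal)) := by nlinarith [hmin, hTVv_real]
    exact le_of_mul_le_mul_left (by linarith) ht0
  by_contra hcon
  push_neg at hcon
  set C := ⟪T u - g, T (w - u)⟫ + α * ((TV Ω w).toReal - (TV Ω u).toReal) with hCdef
  have hCneg : C < 0 := by rw [hCdef]; linarith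
  set K := ‖T (w - u)‖ ^ 2 / 2 with hKdef
  have hK : 0 ≤ K := by positivity
  have ht0pos : 0 < min 1 ((-C) / (K + 1)) :=
    lt_min one_pos (div_pos (neg_pos.2 hCneg) (by linarith))
  have h1 := key _ ht0pos (min_le_left _ _)
  have h2 : min 1 ((-C) / (K + 1)) * K ≤ ((-C) / (K + 1)) * K :=
    mul_le_mul_of_nonneg_right (min_le_right _ _) hK
  have h3 : ((-C) / (K + 1)) * K < -C := by
    rw [div_mul_eq_mul_div, div_lt_iff₀ (by linarith : (0:ℝ) < K + 1)]
    nlinarith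
  linarith

lemma stmt10_alg {α β a b p tA tB : ℝ} (hα : 0 < α) (hαβ : α ≤ β) (ha : 0 ≤ a) (hb : 0 ≤ b)
    (hp : p ≤ a * b) (h1 : α * (tA - tB) ≤ p - a ^ 2) (h2 : β * (tB - tA) ≤ p - b ^ 2) :
    Real.sqrt (1 / 2 * b ^ 2) / β ≤ Real.sqrt (1 / 2 * a ^ 2) / α := by
  have hβ : 0 < β := lt_of_lt_of_le hα hαβ
  have h1b := mul_le_mul_of_nonneg_left h1 hβ.le
  have h2a := mul_le_mul_of_nonneg_left h2 hα.le
  have hmain : β * a ^ 2 + α * b ^ 2 ≤ (α + β) * (a * b) := by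
    nlinarith [mul_le_mul_of_nonneg_left hp (by linarith : (0:ℝ) ≤ α + β)]
  have hab : b * α ≤ a * β := by
    rcases le_total b a with h | h
    · nlinarith
    · by_contra hc2
      push_neg at hc2
      have hba : 0 < b - a := by nlinarith [mul_nonneg ha (sub_nonneg.2 hαβ)]
      have hfac : 0 < (b - a) * (α * b - β * a) := mul_pos hba (by nlinarith)
      nlinarith
  rw [div_le_div_iff₀ hβ hα]
  have hsa : Real.sqrt (1 / 2 * a ^ 2) = Real.sqrt (1 / 2) * a := by
    rw [Real.sqrt_mul (by norm_num), Real.sqrt_sq ha]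
  have hsb : Real.sqrt (1 / 2 * b ^ 2) = Real.sqrt (1 / 2) * b := by
    rw [Real.sqrt_mul (by norm_num), Real.sqrt_sq hb]
  rw [hsa, hsb, mul_assoc, mul_assoc]
  exact mul_le_mul_of_nonneg_left hab (Real.sqrt_nonneg _)

end AuxStmt10

/-- If `‖T*(Tu-g)‖ = c‖Tu-g‖` for all `u`, then
`α ↦ √(H₂(u_α;g))/α` is non-increasing along minimizers of `J₂(·,α)`. -/
theorem stmt10 (Ω : Set E2) (hΩo : IsOpen Ω) (hΩb : Bornology.IsBounded Ω)
    (hΩpos : 0 < MeasureTheory.volume Ω)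
    (T : LpΩ Ω →L[ℝ] LpΩ Ω) (g : LpΩ Ω)
    (c : ℝ) (hc : 0 < c)
    (hadj : ∀ u : LpΩ Ω, ‖ContinuousLinearMap.adjoint T (T u - g)‖ = c * ‖T u - g‖)
    (α β : ℝ) (hα : 0 < α) (hαβ : α ≤ β)
    (uα uβ : LpΩ Ω)
    (huα : IsJMin Ω 2 T g α uα) (huβ : IsJMin Ω 2 T g β uβ) :
    Real.sqrt (Hfid Ω 2 T g uβ) / β ≤ Real.sqrt (Hfid Ω 2 T g uα) / α := by
  have hβ : 0 < β := lt_of_lt_of_le hα hαβ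
  have h1 := stmt10_varIneq hΩb T g hα huα huβ.1
  have h2 := stmt10_varIneq hΩb T g hβ huβ huα.1
  have hTd : T (uβ - uα) = (T uβ - g) - (T uα - g) := by rw [map_sub]; abel
  have hTd' : T (uα - uβ) = (T uα - g) - (T uβ - g) := by rw [map_sub]; abel
  rw [hTd, inner_sub_right] at h1
  rw [hTd', inner_sub_right] at h2
  rw [real_inner_self_eq_norm_sq] at h1 h2
  rw [real_inner_comm] at h2
  rw [stmt10_Hfid_eq T g uα, stmt10_Hfid_eq T g uβ]
  exact stmt10_alg hα hαβ (norm_nonneg _) (norm_nonneg _)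
    (real_inner_le_norm _ _) h1 h2

end
end
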